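/- If Kl(T_M) has countable powers of 1, then there exist functions lgcd : (ℕ → Option M) → M and red : (ℕ → Option M) → (ℕ → Option M) satisfying conditions (a) and (b). -/

import Mathlib

/-- Kleisli composition for the monad `T_M X = Option (M × X)`. -/
def KlComp {M : Type} [Monoid M] {X Y Z : Type}
    (g : Y → Option (M × Z)) (f : X → Option (M × Y)) : X → Option (M × Z) :=
  fun x => (f x).bind fun p => (g p.2).map fun q => (p.1 * q.1, q.2)

/-- The Kleisli identity on `X`. -/
def KlId (M : Type) [Monoid M] (X : Type) : X → Option (M × X) :=
  fun x => some (1, x)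

/-- A Kleisli morphism is an isomorphism when it has a two-sided inverse. -/
def IsKlIso {M : Type} [Monoid M] {X Y : Type} (f : X → Option (M × Y)) : Prop :=
  ∃ g : Y → Option (M × X), KlComp g f = KlId M X ∧ KlComp f g = KlId M Y

/-- The class `Surj` of Kleisli morphisms. -/
def KlSurj {M X Y : Type} (f : X → Option (M × Y)) : Prop :=
  ∀ y : Y, ∃ (x : X) (υ : M), f x = some (υ, y)

/-- The class `Inj` of Kleisli morphisms. -/
def KlInj {M X Y : Type} (f : X → Option (M × Y)) : Prop :=
  ∀ (x x' : X) (υ υ' : M) (y : Y), f x = some (υ, y) → f x' = some (υ', y) → x = x'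

/-- The class `Tot` of Kleisli morphisms. -/
def KlTot {M X Y : Type} (f : X → Option (M × Y)) : Prop :=
  ∀ x : X, f x ≠ none

/-- The class `Inv` of Kleisli morphisms. -/
def KlInv {M : Type} [Monoid M] {X Y : Type} (f : X → Option (M × Y)) : Prop :=
  ∀ (x : X) (υ : M) (y : Y), f x = some (υ, y) → IsUnit υ
/-- `Λ : ℕ → Option M` is nontrivial if it is defined somewhere. -/
def NontrivialFn {M : Type} (Λ : ℕ → Option M) : Prop :=
  Λ ≠ fun _ => none

/-- `υ • Λ`, multiplying each defined value of `Λ` by `υ` on the left. -/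
def smulFn {M : Type} [Monoid M] (υ : M) (Λ : ℕ → Option M) : ℕ → Option M :=
  fun n => (Λ n).map (υ * ·)

/-- The functions `lgcd` and `red` satisfy conditions (a) and (b). -/
def SatisfiesLgcdRed (M : Type) [Monoid M] (lgcd : (ℕ → Option M) → M)
    (red : (ℕ → Option M) → (ℕ → Option M)) : Prop :=
  (∀ Λ, NontrivialFn Λ → NontrivialFn (red Λ)) ∧
  (∀ Λ, NontrivialFn Λ → Λ = smulFn (lgcd Λ) (red Λ)) ∧
  (∀ Γ Λ, NontrivialFn Γ → NontrivialFn Λ → ∀ υ ν : M,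
    smulFn υ (red Γ) = smulFn ν (red Λ) → υ = ν ∧ red Γ = red Λ)
/-- `Kl(T_M)` has countable powers of `1`. -/
def HasCountablePowersOfOne (M : Type) [Monoid M] : Prop :=
  ∃ (P : Type) (π : ℕ → P → Option (M × PUnit)),
    ∀ (X : Type) (f : ℕ → X → Option (M × PUnit)),
      ∃! h : X → Option (M × P), ∀ n, KlComp (π n) h = f n

theorem exists_lgcd_red_of_countable_powers (M : Type) [Monoid M]
    (h : HasCountablePowersOfOne M) :
    ∃ (lgcd : (ℕ → Option M) → M) (red : (ℕ → Option M) → (ℕ → Option M)),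
      SatisfiesLgcdRed M lgcd red := by
  classical
  obtain ⟨P, π, hP⟩ := h
  -- family of morphisms PUnit → Option (M × PUnit) associated to Λ
  set F : (ℕ → Option M) → ℕ → PUnit → Option (M × PUnit) :=
    fun Λ n _ => (Λ n).map (fun m => (m, PUnit.unit)) with hF
  set H : (ℕ → Option M) → PUnit → Option (M × P) :=
    fun Λ => Classical.choose (hP PUnit (F Λ)) with hH
  have Hspec : ∀ Λ n, KlComp (π n) (H Λ) = F Λ n :=
    fun Λ => (Classical.choose_spec (hP PUnit (F Λ))).1
  -- the unique mediating morphism is defined (somewhere-defined) when Λ is nontrivial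
  have hsome : ∀ Λ : ℕ → Option M, NontrivialFn Λ →
      ∃ υ p, H Λ PUnit.unit = some (υ, p) := by
    intro Λ hΛ
    obtain ⟨n, hn⟩ : ∃ n, Λ n ≠ none := by
      by_contra hc
      push_neg at hc
      exact hΛ (funext fun n => hc n)
    have hcf := congrFun (Hspec Λ n) PUnit.unit
    cases hHu : H Λ PUnit.unit with
    | none =>
        simp only [KlComp, hHu, Option.bind_none, hF] at hcf
        cases hΛn : Λ n with
        | some m => rw [hΛn] at hcf; simp at hcf
        | none => exact absurd hΛn hn
    | some pr => exact ⟨pr.1, pr.2, by simp [hHu]⟩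
  -- condition (a) pointwise, from the projection equations
  have ha : ∀ (Λ : ℕ → Option M) (υ : M) (p : P), H Λ PUnit.unit = some (υ, p) →
      ∀ n, Λ n = ((π n p).map Prod.fst).map (υ * ·) := by
    intro Λ υ p hHu n
    have hcf := congrFun (Hspec Λ n) PUnit.unit
    simp only [KlComp, hHu, Option.bind_some, hF] at hcf
    cases hπ : π n p with
    | none =>
        rw [hπ] at hcf
        cases hΛn : Λ n with
        | none => simp [hπ]
        | some m => rw [hΛn] at hcf; simp at hcf
    | some q =>
        rw [hπ] at hcf
        cases hΛn : Λ n with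
        | none => rw [hΛn] at hcf; simp at hcf
        | some m =>
            rw [hΛn] at hcf
            simp only [Option.map_some, Option.some.injEq, Prod.mk.injEq] at hcf
            simp [hπ, hcf.1]
  refine ⟨fun Λ => ((H Λ PUnit.unit).map Prod.fst).getD 1,
          fun Λ n => ((H Λ PUnit.unit).bind fun pr => π n pr.2).map Prod.fst,
          ?_, ?_, ?_⟩
  · -- red preserves nontriviality
    intro Λ hΛ
    obtain ⟨υ, p, hHu⟩ := hsome Λ hΛ
    intro hred
    apply hΛ
    funext n
    have := congrFun hred n
    beta_reduce at this
    rw [hHu] at this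
    simp only [Option.bind_some] at this
    rw [ha Λ υ p hHu n, this]
    rfl
  · -- condition (a)
    intro Λ hΛ
    obtain ⟨υ, p, hHu⟩ := hsome Λ hΛ
    funext n
    rw [ha Λ υ p hHu n]
    simp [smulFn, hHu]
  · -- condition (b)
    intro Γ Λ hΓ hΛ υ ν heq
    obtain ⟨υ₀, p, hHΓ⟩ := hsome Γ hΓ
    obtain ⟨ν₀, q, hHΛ⟩ := hsome Λ hΛ
    -- both candidate mediating morphisms for the family F (smulFn υ (redΓ))
    have hrΓ : ∀ n, ((H Γ PUnit.unit).bind fun pr => π n pr.2).map Prod.fst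
        = (π n p).map Prod.fst := by intro n; rw [hHΓ]; rfl
    have hrΛ : ∀ n, ((H Λ PUnit.unit).bind fun pr => π n pr.2).map Prod.fst
        = (π n q).map Prod.fst := by intro n; rw [hHΛ]; rfl
    set G : ℕ → PUnit → Option (M × PUnit) :=
      fun n _ => (π n p).map (fun r => (υ * r.1, r.2)) with hG
    have h1 : ∀ n, KlComp (π n) (fun _ : PUnit => some (υ, p)) = G n := by
      intro n; funext u; simp [KlComp, hG]
    have h2 : ∀ n, KlComp (π n) (fun _ : PUnit => some (ν, q)) = G n := by
      intro n
      have hn := congrFun heq n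
      simp only [smulFn, hrΓ, hrΛ] at hn
      funext u
      simp only [KlComp, Option.bind_some, hG]
      cases hπp : π n p with
      | none =>
          rw [hπp] at hn
          cases hπq : π n q with
          | none => simp
          | some r => rw [hπq] at hn; simp at hn
      | some r =>
          rw [hπp] at hn
          cases hπq : π n q with
          | none => rw [hπq] at hn; simp at hn
          | some r' =>
              rw [hπq] at hn
              simp only [Option.map_some, Option.some.injEq] at hn ⊢
              exact Prod.ext hn.symm (Subsingleton.elim _ _)
    have huniq := (hP PUnit G).unique (fun n => h1 n) (fun n => h2 n)
    have hpt := congrFun huniq PUnit.unit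
    simp only [Option.some.injEq, Prod.mk.injEq] at hpt
    obtain ⟨hυν, hpq⟩ := hpt
    refine ⟨hυν, funext fun n => ?_⟩
    beta_reduce
    rw [hrΓ, hrΛ, hpq]
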